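/- Fix a real number x, and let ϱ_n(y) be defined by ϱ_0(y) = 1, ϱ_1(y) = y − x + 1/2, and ϱ_{n+1}(y) = (y − x + 1/2)·ϱ_n(y) − (n⁴/(4(2n+1)(2n−1)))·ϱ_{n−1}(y) for n ≥ 1. Then for every n ≥ 0 and every real y, ϱ_n(y) = (n!/(n+1)_n) · p_n(y − x + 1/2; 1/2, 1/2, 1/2, 1/2), where p_n(z; 1/2,1/2,1/2,1/2) = i^n n! Σ_{k=0}^n [((−n)_k (n+1)_k (1/2+iz)_k)/(k!)³] is the continuous Hahn polynomial with all four parameters equal to 1/2 (a complex expression whose value is real), and (n+1)_n = (2n)!/n!. -/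

import Mathlib

/-- The Pochhammer symbol `(a)_k = a (a+1) ⋯ (a+k-1)` for complex `a`. -/
noncomputable def pochC (a : ℂ) (k : ℕ) : ℂ := ∏ i ∈ Finset.range k, (a + i)

/-- The continuous Hahn polynomial with all four parameters equal to `1/2`:
`p_n(z; 1/2,1/2,1/2,1/2) = i^n n! Σ_{k=0}^n [((-n)_k (n+1)_k (1/2 + iz)_k) / (k!)³]`. -/
noncomputable def continuousHahnHalf (n : ℕ) (z : ℂ) : ℂ :=
  Complex.I ^ n * (n.factorial : ℂ) *
    ∑ k ∈ Finset.range (n + 1),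
      pochC (-(n : ℂ)) k * pochC ((n : ℂ) + 1) k * pochC (1 / 2 + Complex.I * z) k /
        ((k.factorial : ℂ)) ^ 3

lemma pochC_zero (a : ℂ) : pochC a 0 = 1 := by simp [pochC]

lemma pochC_succ (a : ℂ) (k : ℕ) : pochC a (k+1) = pochC a k * (a + k) :=
  Finset.prod_range_succ _ _

lemma pochC_succ' (a : ℂ) (k : ℕ) : pochC a (k+1) = a * pochC (a+1) k := by
  have h : ∀ i ∈ Finset.range k, (a + ((i+1 : ℕ) : ℂ)) = (a+1) + (i : ℂ) := by
    intro i _; push_cast; ring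
  rw [pochC, Finset.prod_range_succ', Finset.prod_congr rfl h]
  simp [pochC, mul_comm]

noncomputable def aC (n k : ℕ) : ℂ :=
  pochC (-(n:ℂ)) k * pochC ((n:ℂ)+1) k / ((k.factorial : ℂ))^3

lemma aC_zero (n : ℕ) : aC n 0 = 1 := by simp [aC, pochC]

lemma aC_eq_zero {n k : ℕ} (h : n < k) : aC n k = 0 := by
  have h0 : pochC (-(n:ℂ)) k = 0 :=
    Finset.prod_eq_zero (Finset.mem_range.mpr h) (by simp)
  simp [aC, h0]

lemma A0 (m k : ℕ) : aC (m+1) k =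
    pochC (-((m:ℂ)+1)) k * pochC ((m:ℂ)+2) k / ((k.factorial : ℂ))^3 := by
  rw [aC, show -((m+1:ℕ):ℂ) = -((m:ℂ)+1) by push_cast; ring,
    show ((m+1:ℕ):ℂ)+1 = (m:ℂ)+2 by push_cast; ring]

lemma A2 (m k : ℕ) : aC (m+1) (k+1) =
    pochC (-((m:ℂ)+1)) k * pochC ((m:ℂ)+2) k * ((k:ℂ)-((m:ℂ)+1)) * ((m:ℂ)+2+k)
      / (((k+1).factorial : ℂ))^3 := by
  rw [A0, pochC_succ, pochC_succ]
  push_cast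
  ring

lemma A1 (m k : ℕ) : aC (m+2) (k+1) =
    -(pochC (-((m:ℂ)+1)) k * pochC ((m:ℂ)+2) k) * ((m:ℂ)+2+k) * ((m:ℂ)+3+k)
      / (((k+1).factorial : ℂ))^3 := by
  set c := (m:ℂ) with hc
  set P := pochC (-(c+1)) k with hP
  set Q := pochC (c+2) k with hQ
  have h2 : pochC (-(c+2)) (k+1) = -(c+2) * P := by
    rw [pochC_succ', show -(c+2)+1 = -(c+1) by ring]
  have h3 : (c+2) * pochC (c+3) (k+1) = Q * ((c+2)+k) * ((c+3)+k) := by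
    have e1 : pochC (c+2) (k+2) = (c+2) * pochC (c+3) (k+1) := by
      rw [pochC_succ' (c+2) (k+1), show c+2+1 = c+3 by ring]
    have e2 : pochC (c+2) (k+2) = Q * ((c+2)+k) * ((c+2)+((k:ℂ)+1)) := by
      rw [pochC_succ (c+2) (k+1), pochC_succ (c+2) k]
      push_cast
      ring
    rw [← e1, e2]; ring
  have hstep : aC (m+2) (k+1)
      = (-(c+2) * P) * pochC (c+3) (k+1) / (((k+1).factorial : ℂ))^3 := by
    rw [aC, show -((m+2:ℕ):ℂ) = -(c+2) by push_cast; ring,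
      show ((m+2:ℕ):ℂ)+1 = c+3 by push_cast; ring, h2]
  rw [hstep]
  have hnum : (-(c+2) * P) * pochC (c+3) (k+1) = -(P*Q) * ((c+2)+k) * ((c+3)+k) := by
    linear_combination (-P) * h3
  rw [hnum]

lemma A3 (m k : ℕ) : aC m (k+1) =
    -(pochC (-((m:ℂ)+1)) k * pochC ((m:ℂ)+2) k) * ((k:ℂ)-((m:ℂ)+1)) * ((k:ℂ)-(m:ℂ))
      / (((k+1).factorial : ℂ))^3 := by
  set c := (m:ℂ) with hc
  set P := pochC (-(c+1)) k with hP
  set Q := pochC (c+2) k with hQ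
  have hT : -(c+1) * pochC (-c) k = P * ((k:ℂ)-(c+1)) := by
    have e1 : pochC (-(c+1)) (k+1) = -(c+1) * pochC (-c) k := by
      rw [pochC_succ', show -(c+1)+1 = -c by ring]
    have e2 : pochC (-(c+1)) (k+1) = P * (-(c+1)+k) := pochC_succ _ _
    rw [e1] at e2
    linear_combination e2
  have hQ1 : pochC (c+1) (k+1) = (c+1) * Q := by
    rw [pochC_succ', show c+1+1 = c+2 by ring]
  rw [aC, hQ1, pochC_succ]
  have : pochC (-c) k * (-c + (k:ℂ)) * ((c+1) * Q) = -(P*Q) * ((k:ℂ)-(c+1)) * ((k:ℂ)-c) := by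
    linear_combination (-((k:ℂ)-c) * Q) * hT
  rw [this]

lemma key (m k : ℕ) :
    ((m:ℂ)+2)^2 * aC (m+2) (k+1)
      = (2*(m:ℂ)+3) * (2*(k:ℂ)+3) * aC (m+1) (k+1)
        + ((m:ℂ)+1)^2 * aC m (k+1)
        - 2*(2*(m:ℂ)+3) * aC (m+1) k := by
  rw [A1, A2, A3, A0]
  have hfact : (((k+1).factorial : ℕ) : ℂ) = ((k:ℂ)+1) * (k.factorial : ℂ) := by
    rw [Nat.factorial_succ]; push_cast; ring
  rw [hfact]
  have h1 : ((k.factorial : ℕ) : ℂ) ≠ 0 := Nat.cast_ne_zero.mpr (Nat.factorial_ne_zero k)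
  have h2 : ((k:ℂ)+1) ≠ 0 := by
    have := Nat.cast_add_one_ne_zero (R := ℂ) k
    exact_mod_cast this
  field_simp
  ring

noncomputable def SC (n : ℕ) (w : ℂ) : ℂ := ∑ k ∈ Finset.range (n+1), aC n k * pochC w k

lemma SC_rec (m : ℕ) (w : ℂ) :
    ((m:ℂ)+2)^2 * SC (m+2) w
      = (2*(m:ℂ)+3) * (1 - 2*w) * SC (m+1) w + ((m:ℂ)+1)^2 * SC m w := by
  have hz1 : aC (m+1) (m+2) = 0 := aC_eq_zero (by omega)
  have hz2 : aC m (m+1) = 0 := aC_eq_zero (by omega)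
  have hz3 : aC m (m+2) = 0 := aC_eq_zero (by omega)
  have e1 : SC (m+2) w = ∑ k ∈ Finset.range (m+3), aC (m+2) k * pochC w k := rfl
  have e2 : ∑ k ∈ Finset.range (m+3), aC (m+1) k * pochC w k = SC (m+1) w := by
    rw [show m+3 = (m+2)+1 from rfl, Finset.sum_range_succ, hz1, zero_mul, add_zero]
    rfl
  have e3 : ∑ k ∈ Finset.range (m+3), aC m k * pochC w k = SC m w := by
    rw [show m+3 = (m+2)+1 from rfl, Finset.sum_range_succ, hz3, zero_mul, add_zero,
      show m+2 = (m+1)+1 from rfl, Finset.sum_range_succ, hz2, zero_mul, add_zero]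
    rfl
  have claim : ∑ k ∈ Finset.range (m+3),
        (((m:ℂ)+2)^2 * aC (m+2) k - (2*(m:ℂ)+3)*(2*(k:ℂ)+1) * aC (m+1) k
          - ((m:ℂ)+1)^2 * aC m k) * pochC w k
      = - ∑ k ∈ Finset.range (m+2), (2*(2*(m:ℂ)+3)) * aC (m+1) k * pochC w (k+1) := by
    rw [show m+3 = (m+2)+1 from rfl, Finset.sum_range_succ']
    have h0 : (((m:ℂ)+2)^2 * aC (m+2) 0 - (2*(m:ℂ)+3)*(2*((0:ℕ):ℂ)+1) * aC (m+1) 0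
        - ((m:ℂ)+1)^2 * aC m 0) * pochC w 0 = 0 := by
      simp only [aC_zero, pochC_zero, mul_one, Nat.cast_zero]
      ring
    rw [h0, add_zero, ← Finset.sum_neg_distrib]
    apply Finset.sum_congr rfl
    intro k _
    push_cast
    linear_combination pochC w (k+1) * key m k
  have split : ∑ k ∈ Finset.range (m+3),
        (((m:ℂ)+2)^2 * aC (m+2) k - (2*(m:ℂ)+3)*(2*(k:ℂ)+1) * aC (m+1) k
          - ((m:ℂ)+1)^2 * aC m k) * pochC w k
      = (∑ k ∈ Finset.range (m+3), ((m:ℂ)+2)^2 * (aC (m+2) k * pochC w k))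
        - (∑ k ∈ Finset.range (m+3), (2*(m:ℂ)+3)*(2*(k:ℂ)+1) * aC (m+1) k * pochC w k)
        - (∑ k ∈ Finset.range (m+3), ((m:ℂ)+1)^2 * (aC m k * pochC w k)) := by
    rw [← Finset.sum_sub_distrib, ← Finset.sum_sub_distrib]
    apply Finset.sum_congr rfl
    intro k _
    ring
  have expand : (2*(m:ℂ)+3) * (1 - 2*w) * (∑ k ∈ Finset.range (m+3), aC (m+1) k * pochC w k)
      = (∑ k ∈ Finset.range (m+3), (2*(m:ℂ)+3)*(2*(k:ℂ)+1) * aC (m+1) k * pochC w k)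
        - ∑ k ∈ Finset.range (m+3), (2*(2*(m:ℂ)+3)) * aC (m+1) k * pochC w (k+1) := by
    rw [Finset.mul_sum, ← Finset.sum_sub_distrib]
    apply Finset.sum_congr rfl
    intro k _
    rw [pochC_succ]
    ring
  have shrink : ∑ k ∈ Finset.range (m+3), (2*(2*(m:ℂ)+3)) * aC (m+1) k * pochC w (k+1)
      = ∑ k ∈ Finset.range (m+2), (2*(2*(m:ℂ)+3)) * aC (m+1) k * pochC w (k+1) := by
    rw [show m+3 = (m+2)+1 from rfl, Finset.sum_range_succ, hz1]
    simp
  rw [e1, ← e2, ← e3, expand, shrink, Finset.mul_sum, Finset.mul_sum]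
  linear_combination claim - split

lemma hahn_eq (n : ℕ) (z : ℂ) :
    continuousHahnHalf n z
      = Complex.I ^ n * (n.factorial : ℂ) * SC n (1/2 + Complex.I * z) := by
  rw [continuousHahnHalf, SC]
  congr 1
  apply Finset.sum_congr rfl
  intro k _
  rw [aC]
  ring

lemma pochC_ratio (a : ℂ) (j : ℕ) :
    a * pochC (a+1) (j+1) = pochC a j * ((a + j) * (a+1+j)) := by
  have h1 : pochC a (j+1) = pochC a j * (a + j) := pochC_succ _ _
  have h2 : pochC a (j+1) = a * pochC (a+1) j := pochC_succ' _ _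
  have h3 : pochC (a+1) (j+1) = pochC (a+1) j * (a+1+j) := pochC_succ _ _
  rw [h3]
  linear_combination (a+1+(j:ℂ)) * (h2.symm.trans h1)

lemma pochC_nat_ne_zero (n j : ℕ) : pochC ((n:ℂ)+1) j ≠ 0 := by
  rw [pochC]
  rw [Finset.prod_ne_zero_iff]
  intro i _
  have : ((n:ℂ)+1+(i:ℂ)) = ((n+1+i : ℕ) : ℂ) := by push_cast; ring
  rw [this]
  have hne : (n+1+i : ℕ) ≠ 0 := by omega
  exact Nat.cast_ne_zero.mpr hne

lemma q_rec (m : ℕ) (z : ℂ) :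
    (((m+2).factorial : ℂ) / pochC (((m+2:ℕ):ℂ)+1) (m+2)) * continuousHahnHalf (m+2) z
      = z * ((((m+1).factorial : ℂ) / pochC (((m+1:ℕ):ℂ)+1) (m+1)) * continuousHahnHalf (m+1) z)
        - (((m+1:ℕ):ℂ)^4 / (4*(2*((m+1:ℕ):ℂ)+1)*(2*((m+1:ℕ):ℂ)-1))) *
          (((m.factorial : ℂ) / pochC ((m:ℂ)+1) m) * continuousHahnHalf m z) := by
  have hrec := SC_rec m (1/2 + Complex.I * z)
  rw [show (1:ℂ) - 2*(1/2 + Complex.I*z) = (-2)*Complex.I*z by ring] at hrec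
  have hR1 := pochC_ratio ((m:ℂ)+1) m
  rw [show (m:ℂ)+1+1 = (m:ℂ)+2 by ring] at hR1
  have hR2 := pochC_ratio ((m:ℂ)+2) (m+1)
  rw [show m+1+1 = m+2 from rfl, show (m:ℂ)+2+1 = (m:ℂ)+3 by ring] at hR2
  push_cast at hR2
  -- nonzero facts
  have hm1 : ((m:ℂ)+1) ≠ 0 := by exact_mod_cast Nat.cast_add_one_ne_zero (R := ℂ) m
  have hm2 : ((m:ℂ)+2) ≠ 0 := by
    intro h
    have : ((m:ℕ):ℂ) = -2 := by linear_combination h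
    have h2 : (0:ℝ) ≤ ((m:ℕ):ℝ) := Nat.cast_nonneg m
    have := congrArg Complex.re this
    simp at this
    linarith
  have h2m1 : (2*(m:ℂ)+1) ≠ 0 := by
    intro h
    have := congrArg Complex.re h
    push_cast at this
    simp at this
    have h2 : (0:ℝ) ≤ ((m:ℕ):ℝ) := Nat.cast_nonneg m
    linarith
  have h2m3 : (2*(m:ℂ)+3) ≠ 0 := by
    intro h
    have := congrArg Complex.re h
    push_cast at this
    simp at this
    have h2 : (0:ℝ) ≤ ((m:ℕ):ℝ) := Nat.cast_nonneg m
    linarith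
  have hfne : (m.factorial : ℂ) ≠ 0 := Nat.cast_ne_zero.mpr (Nat.factorial_ne_zero m)
  have hRne0 : pochC ((m:ℂ)+1) m ≠ 0 := pochC_nat_ne_zero m m
  have hRne1 : pochC ((m:ℂ)+2) (m+1) ≠ 0 := by
    have := pochC_nat_ne_zero (m+1) (m+1)
    rwa [show ((m+1:ℕ):ℂ)+1 = (m:ℂ)+2 by push_cast; ring] at this
  have hRne2 : pochC ((m:ℂ)+3) (m+2) ≠ 0 := by
    have := pochC_nat_ne_zero (m+2) (m+2)
    rwa [show ((m+2:ℕ):ℂ)+1 = (m:ℂ)+3 by push_cast; ring] at this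
  -- factorials
  have hf2 : (((m+2).factorial : ℕ) : ℂ) = ((m:ℂ)+2)*((m:ℂ)+1)*(m.factorial : ℂ) := by
    rw [show m+2 = (m+1)+1 from rfl, Nat.factorial_succ, Nat.factorial_succ]
    push_cast; ring
  have hf1 : (((m+1).factorial : ℕ) : ℂ) = ((m:ℂ)+1)*(m.factorial : ℂ) := by
    rw [Nat.factorial_succ]; push_cast; ring
  -- I powers
  have hI2 : Complex.I^(m+2) = -(Complex.I^m) := by
    rw [pow_add, Complex.I_sq, mul_neg_one]
  have hI1 : Complex.I^(m+1) = Complex.I^m * Complex.I := pow_succ _ _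
  -- substitution forms
  have hden2 : pochC ((m:ℂ)+1) m * (4*(2*(m:ℂ)+1)*(2*(m:ℂ)+3)) ≠ 0 := by
    apply mul_ne_zero hRne0
    apply mul_ne_zero (mul_ne_zero (by norm_num) h2m1) h2m3
  have hden1 : pochC ((m:ℂ)+1) m * (2*(2*(m:ℂ)+1)) ≠ 0 := by
    apply mul_ne_zero hRne0
    apply mul_ne_zero (by norm_num) h2m1
  have hr2 : ((m:ℂ)+2)*((m:ℂ)+1)*(m.factorial:ℂ) / pochC ((m:ℂ)+3) (m+2)
      = (m.factorial:ℂ) / pochC ((m:ℂ)+1) m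
          * (((m:ℂ)+1)*((m:ℂ)+2) / (4*(2*(m:ℂ)+1)*(2*(m:ℂ)+3))) := by
    rw [div_mul_div_comm, div_eq_div_iff hRne2 hden2]
    linear_combination (-((m.factorial:ℂ)*((m:ℂ)+1))) * hR2
      - (m.factorial:ℂ)*(((m:ℂ)+2+((m:ℂ)+1))*((m:ℂ)+3+((m:ℂ)+1))) * hR1
  have hr1 : ((m:ℂ)+1)*(m.factorial:ℂ) / pochC ((m:ℂ)+2) (m+1)
      = (m.factorial:ℂ) / pochC ((m:ℂ)+1) m * (((m:ℂ)+1) / (2*(2*(m:ℂ)+1))) := by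
    rw [div_mul_div_comm, div_eq_div_iff hRne1 hden1]
    linear_combination (-(m.factorial:ℂ)) * hR1
  have hS2 : SC (m+2) (1/2 + Complex.I * z)
      = ((2*(m:ℂ)+3) * ((-2)*Complex.I*z) * SC (m+1) (1/2 + Complex.I * z)
          + ((m:ℂ)+1)^2 * SC m (1/2 + Complex.I * z)) / ((m:ℂ)+2)^2 := by
    rw [eq_div_iff (pow_ne_zero 2 hm2)]
    linear_combination hrec
  have h2m1' : (2*((m:ℂ)+1)-1) ≠ 0 := by
    intro h; apply h2m1; linear_combination h
  have h2m3' : (2*((m:ℂ)+1)+1) ≠ 0 := by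
    intro h; apply h2m3; linear_combination h
  rw [hahn_eq, hahn_eq, hahn_eq, hI2, hI1, hf2, hf1,
      show ((m+2:ℕ):ℂ)+1 = (m:ℂ)+3 by push_cast; ring,
      show ((m+1:ℕ):ℂ)+1 = (m:ℂ)+2 by push_cast; ring, hS2]
  push_cast
  rw [hr2, hr1]
  generalize ((m.factorial:ℂ) / pochC ((m:ℂ)+1) m : ℂ) = T
  have hA : (m:ℂ)*2+1 ≠ 0 := by rw [mul_comm]; exact h2m1
  have hB : (m:ℂ)*2+3 ≠ 0 := by rw [mul_comm]; exact h2m3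
  have hC : ((m:ℂ)+1)*2-1 ≠ 0 := by rw [mul_comm]; exact h2m1'
  have hD : ((m:ℂ)+1)*2+1 ≠ 0 := by rw [mul_comm]; exact h2m3'
  field_simp
  ring

lemma q_zero (z : ℂ) :
    (((0:ℕ).factorial : ℂ) / pochC (((0:ℕ):ℂ)+1) 0) * continuousHahnHalf 0 z = 1 := by
  simp [continuousHahnHalf, pochC]

lemma q_one (z : ℂ) :
    (((1:ℕ).factorial : ℂ) / pochC ((1:ℂ)+1) 1) * continuousHahnHalf 1 z = z := by
  rw [continuousHahnHalf]
  rw [Finset.sum_range_succ, Finset.sum_range_one]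
  simp [pochC, Finset.prod_range_one]
  linear_combination (-z) * Complex.I_mul_I


/-- the monic orthogonal polynomials `ϱ_n` for the Bernoulli
polynomial moments, defined by the recurrence
`ϱ_{n+1} = (y - x + 1/2) ϱ_n - (n⁴/(4(2n+1)(2n-1))) ϱ_{n-1}`,
are given by `ϱ_n(y) = (n!/(n+1)_n) p_n(y - x + 1/2; 1/2,1/2,1/2,1/2)`,
where `(n+1)_n = (2n)!/n!`. -/
theorem stmt_11 (x : ℝ)
    (ϱ : ℕ → ℝ → ℝ)
    (hϱ0 : ∀ y : ℝ, ϱ 0 y = 1)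
    (hϱ1 : ∀ y : ℝ, ϱ 1 y = y - x + 1 / 2)
    (hϱrec : ∀ n : ℕ, 1 ≤ n → ∀ y : ℝ,
      ϱ (n + 1) y = (y - x + 1 / 2) * ϱ n y
        - ((n : ℝ) ^ 4 / (4 * (2 * (n : ℝ) + 1) * (2 * (n : ℝ) - 1))) * ϱ (n - 1) y) :
    ∀ (n : ℕ) (y : ℝ),
      (ϱ n y : ℂ) = ((n.factorial : ℂ) / pochC ((n : ℂ) + 1) n) *
        continuousHahnHalf n ((y : ℂ) - (x : ℂ) + 1 / 2) := by

  intro n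
  induction n using Nat.twoStepInduction with
  | zero =>
    intro y
    rw [hϱ0]
    push_cast
    norm_num [continuousHahnHalf, pochC]
  | one =>
    intro y
    rw [hϱ1]
    push_cast
    exact (q_one _).symm
  | more n ih1 ih2 =>
    intro y
    have hrec := hϱrec (n+1) (by omega) y
    rw [show n+1+1 = n+2 from rfl, Nat.add_sub_cancel] at hrec
    rw [q_rec n ((y:ℂ) - (x:ℂ) + 1/2), ← ih1 y, ← ih2 y, hrec]
    push_cast
    ring
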